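/- Let n be a positive integer and let T = (τ_0, τ_1, τ_2, ...) be a sequence of finite sequences such that each τ_d is a truncation of [n]^d (in particular τ_0 = (n)). Then the following are equivalent: (i) T is a coherent fractal growth, i.e. τ_j is a truncation of [τ_{j-1}] for every j ≥ 1; (ii) the sequence of lengths (|τ_0|, |τ_1|, |τ_2|, ...) is an O-sequence. -/

import Mathlib

/-- The expansion `[σ]` of a finite sequence of positive integers. -/
def expand (σ : List ℕ) : List ℕ := (σ.map fun a => List.range' 1 a).flatten

/-- The Macaulay operator `h ↦ h^{⟨i⟩}`: if
`h = C(m_i,i) + C(m_{i-1},i-1) + … + C(m_j,j)` (with `m_i > … > m_j ≥ j ≥ 1`) is the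
`i`-binomial expansion of `h > 0`, then
`h^{⟨i⟩} = C(m_i+1,i+1) + C(m_{i-1}+1,i) + … + C(m_j+1,j+1)`; and `0^{⟨i⟩} = 0`.
It is computed greedily: `m_i` is the largest `m` with `C(m,i) ≤ h`. -/
def macaulay : ℕ → ℕ → ℕ
  | _, 0 => 0
  | 0, _ + 1 => 0
  | i + 1, h + 1 =>
    let m := Nat.findGreatest (fun m => m.choose (i + 1) ≤ h + 1) (h + i + 2)
    (m + 1).choose (i + 2) + macaulay i (h + 1 - m.choose (i + 1))

/-- An `O`-sequence: `h_0 = 1` and `h_{i+1} ≤ h_i^{⟨i⟩}` for all `i > 0`. -/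
def IsOSeq (h : ℕ → ℕ) : Prop :=
  h 0 = 1 ∧ ∀ i : ℕ, 0 < i → h (i + 1) ≤ macaulay i (h i)



lemma expand_append (l₁ l₂ : List ℕ) : expand (l₁ ++ l₂) = expand l₁ ++ expand l₂ := by
  simp [expand]

lemma expand_nil : expand [] = [] := rfl

lemma expandIter_nil (d : ℕ) : expand^[d] [] = [] := by
  induction d with
  | zero => rfl
  | succ d ih => rw [Function.iterate_succ_apply, expand_nil, ih]

lemma expandIter_append (d : ℕ) (l₁ l₂ : List ℕ) :
    expand^[d] (l₁ ++ l₂) = expand^[d] l₁ ++ expand^[d] l₂ := by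
  induction d generalizing l₁ l₂ with
  | zero => rfl
  | succ d ih => rw [Function.iterate_succ_apply, expand_append, ih,
      Function.iterate_succ_apply, Function.iterate_succ_apply]

lemma length_expand (σ : List ℕ) : (expand σ).length = σ.sum := by
  simp only [expand, List.length_flatten, List.map_map]
  have : (List.length ∘ fun a => List.range' 1 a) = id := by
    funext a; simp
  rw [this, List.map_id]

lemma expand_single (a : ℕ) : expand [a] = List.range' 1 a := by
  simp [expand]

lemma expandIter_single_one (d : ℕ) : expand^[d] [1] = [1] := by
  induction d with
  | zero => rfl
  | succ d ih => rw [Function.iterate_succ_apply, expand_single]; simpa using ih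

lemma range'_one_concat (a : ℕ) : List.range' 1 (a+1) = List.range' 1 a ++ [a+1] := by
  simpa [Nat.add_comm] using List.range'_concat (step := 1) (s := 1) (n := a)

lemma expandIter_zero (d : ℕ) : expand^[d+1] [0] = [] := by
  rw [Function.iterate_succ_apply, expand_single]
  simpa using expandIter_nil d

lemma expandIter_succ_single (d a : ℕ) :
    expand^[d+1] [a+1] = expand^[d+1] [a] ++ expand^[d] [a+1] := by
  rw [Function.iterate_succ_apply, Function.iterate_succ_apply, expand_single, expand_single,
    range'_one_concat, expandIter_append, ← expand_single]

lemma length_expandIter_single (d a : ℕ) :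
    (expand^[d] [a]).length = (a + d - 1).choose d := by
  induction d generalizing a with
  | zero => simp
  | succ d ih =>
    induction a with
    | zero =>
      rw [expandIter_zero]
      simp [Nat.choose_eq_zero_of_lt]
    | succ a iha =>
      rw [expandIter_succ_single, List.length_append, iha, ih]
      have h1 : a + (d+1) - 1 = a + d := by omega
      have h2 : a + 1 + d - 1 = a + d := by omega
      have h3 : a + 1 + (d+1) - 1 = a + d + 1 := by omega
      rw [h1, h2, h3, Nat.choose_succ_succ (a+d) d, Nat.add_comm]

lemma sum_expandIter_single (d a : ℕ) :
    (expand^[d] [a]).sum = (a + d).choose (d+1) := by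
  have h := length_expandIter_single (d+1) a
  rw [Function.iterate_succ_apply', length_expand] at h
  simpa using h


lemma macaulay_zero (i : ℕ) : macaulay i 0 = 0 := by
  cases i <;> rfl

lemma macaulay_succ (i h : ℕ) :
    macaulay (i+1) (h+1) =
      (Nat.findGreatest (fun m => m.choose (i + 1) ≤ h + 1) (h + i + 2) + 1).choose (i + 2)
        + macaulay i (h + 1 - (Nat.findGreatest (fun m => m.choose (i + 1) ≤ h + 1)
            (h + i + 2)).choose (i + 1)) := by
  rw [macaulay]

-- helper: findGreatest value
lemma findG {i c b k : ℕ} (h1 : c.choose (i+1) ≤ k) (h2 : c ≤ b)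
    (h3 : k < (c+1).choose (i+1)) :
    Nat.findGreatest (fun m => m.choose (i+1) ≤ k) b = c := by
  rw [Nat.findGreatest_eq_iff]
  refine ⟨h2, fun _ => h1, fun m hm _ hP => ?_⟩
  exact absurd (le_trans (Nat.choose_le_choose _ hm) hP) (not_le.2 h3)

lemma c_le_choose (i : ℕ) : ∀ c : ℕ, c ≤ c.choose (i+1) + (i+1) := by
  intro c
  induction c with
  | zero => omega
  | succ c ih =>
    rcases le_or_gt (c+1) (i+1) with h | h
    · omega
    · have hpos : 0 < c.choose i := Nat.choose_pos (by omega)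
      have : (c+1).choose (i+1) = c.choose i + c.choose (i+1) := Nat.choose_succ_succ c i
      omega

lemma macaulay_one_right (k : ℕ) : macaulay 1 k = (k+1).choose 2 := by
  cases k with
  | zero => simp [macaulay_zero, Nat.choose_eq_zero_of_lt]
  | succ h =>
    rw [macaulay_succ]
    have hfind : Nat.findGreatest (fun m => m.choose 1 ≤ h + 1) (h + 0 + 2) = h + 1 := by
      apply findG (i := 0)
      · simp
      · omega
      · simp
    rw [hfind]
    simp [macaulay_zero]

lemma macaulay_choose {i c : ℕ} (hc : i + 1 ≤ c) :
    macaulay (i+1) (c.choose (i+1)) = (c+1).choose (i+2) := by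
  have hpos : 0 < c.choose (i+1) := Nat.choose_pos hc
  obtain ⟨h, hh⟩ : ∃ h, c.choose (i+1) = h + 1 := ⟨c.choose (i+1) - 1, by omega⟩
  rw [hh, macaulay_succ]
  have hfind : Nat.findGreatest (fun m => m.choose (i+1) ≤ h + 1) (h + i + 2) = c := by
    apply findG
    · omega
    · have := c_le_choose i c; omega
    · have hs : (c+1).choose (i+1) = c.choose i + c.choose (i+1) := Nat.choose_succ_succ c i
      have : 0 < c.choose i := Nat.choose_pos (by omega)
      omega
  rw [hfind, ← hh, Nat.sub_self, macaulay_zero, Nat.add_zero]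

lemma macaulay_one_left (i : ℕ) (hi : 1 ≤ i) : macaulay i 1 = 1 := by
  obtain ⟨j, rfl⟩ : ∃ j, i = j + 1 := ⟨i - 1, by omega⟩
  have := macaulay_choose (i := j) (c := j + 1) le_rfl
  simpa using this

lemma macaulay_step {i c r : ℕ} (hi : 1 ≤ i) (hc : i + 1 ≤ c) (hr : 0 < r)
    (hr' : r ≤ c.choose i) :
    macaulay (i+1) (c.choose (i+1) + r) = (c+1).choose (i+2) + macaulay i r := by
  obtain ⟨h, hh⟩ : ∃ h, c.choose (i+1) + r = h + 1 := ⟨c.choose (i+1) + r - 1, by omega⟩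
  rcases lt_or_eq_of_le hr' with hlt | heq
  · rw [hh, macaulay_succ]
    have hfind : Nat.findGreatest (fun m => m.choose (i+1) ≤ h + 1) (h + i + 2) = c := by
      apply findG
      · omega
      · have := c_le_choose i c; omega
      · have hs : (c+1).choose (i+1) = c.choose i + c.choose (i+1) := Nat.choose_succ_succ c i
        omega
    rw [hfind]
    congr 2
    omega
  · -- r = c.choose i, so total = (c+1).choose (i+1), greedy picks c+1
    rw [hh, macaulay_succ]
    have hk : h + 1 = (c+1).choose (i+1) := by
      have hs : (c+1).choose (i+1) = c.choose i + c.choose (i+1) := Nat.choose_succ_succ c i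
      omega
    have hfind : Nat.findGreatest (fun m => m.choose (i+1) ≤ h + 1) (h + i + 2) = c + 1 := by
      apply findG
      · omega
      · have := c_le_choose i (c+1); omega
      · have hs : (c+1+1).choose (i+1) = (c+1).choose i + (c+1).choose (i+1) :=
          Nat.choose_succ_succ (c+1) i
        have : 0 < (c+1).choose i := Nat.choose_pos (by omega)
        omega
    rw [hfind, ← hk, Nat.sub_self, macaulay_zero, Nat.add_zero]
    have hmr : macaulay i r = (c+1).choose (i+1) := by
      obtain ⟨j, rfl⟩ : ∃ j, i = j + 1 := ⟨i - 1, by omega⟩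
      rw [heq]
      exact macaulay_choose (by omega)
    have hs : (c+1+1).choose (i+2) = (c+1).choose (i+1) + (c+1).choose (i+2) :=
      Nat.choose_succ_succ (c+1) (i+1)
    omega

lemma prefix_range' {σ : List ℕ} {a : ℕ} (h : σ <+: List.range' 1 a) :
    σ = List.range' 1 σ.length := by
  have hlen : σ.length ≤ a := by simpa using h.length_le
  obtain ⟨t, ht⟩ := h
  have hsplit : List.range' 1 σ.length ++ List.range' (1 + σ.length) (a - σ.length)
      = List.range' 1 a := by
    have := List.range'_append (s := 1) (m := σ.length) (n := a - σ.length) (step := 1)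
    rw [Nat.one_mul] at this
    rw [this]
    congr 1
    omega
  rw [← hsplit] at ht
  exact (List.append_inj ht (by simp)).1

lemma sum_range'_one (k : ℕ) : (List.range' 1 k).sum = (k+1).choose 2 := by
  induction k with
  | zero => simp
  | succ k ih =>
    rw [range'_one_concat, List.sum_append, ih]
    have hs : (k+1+1).choose 2 = (k+1).choose 1 + (k+1).choose 2 := Nat.choose_succ_succ (k+1) 1
    rw [Nat.choose_one_right] at hs
    simp only [List.sum_cons, List.sum_nil]
    omega

lemma key : ∀ i, 1 ≤ i → ∀ a (σ : List ℕ), σ <+: expand^[i] [a] →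
    σ.sum = macaulay i σ.length := by
  intro i
  induction i with
  | zero => omega
  | succ i ih =>
    intro _
    rcases Nat.eq_zero_or_pos i with rfl | hi1
    · intro a σ hσ
      rw [Function.iterate_one, expand_single] at hσ
      have hσ' := prefix_range' hσ
      calc σ.sum = (List.range' 1 σ.length).sum := by rw [← hσ']
        _ = (σ.length + 1).choose 2 := sum_range'_one _
        _ = macaulay 1 σ.length := (macaulay_one_right _).symm
    · intro a
      induction a with
      | zero =>
        intro σ hσ
        rw [expandIter_zero] at hσ
        rw [List.prefix_nil.mp hσ]
        simp [macaulay_zero]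
      | succ a iha =>
        intro σ hσ
        rw [expandIter_succ_single] at hσ
        set F := expand^[i+1] [a] with hF
        set B := expand^[i] [a+1] with hB
        rcases le_or_gt σ.length F.length with hle | hgt
        · exact iha σ (List.prefix_of_prefix_length_le hσ (List.prefix_append F B) hle)
        · have hFσ : F <+: σ :=
            List.prefix_of_prefix_length_le (List.prefix_append F B) hσ (le_of_lt hgt)
          obtain ⟨ρ, rfl⟩ := hFσ
          have hρB : ρ <+: B := by
            obtain ⟨t, ht⟩ := hσ
            rw [List.append_assoc] at ht
            exact ⟨t, List.append_cancel_left ht⟩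
          have hρsum : ρ.sum = macaulay i ρ.length := ih hi1 (a+1) ρ hρB
          have hρpos : 0 < ρ.length := by rw [List.length_append] at hgt; omega
          have hρle : ρ.length ≤ B.length := hρB.length_le
          rw [List.sum_append, List.length_append]
          rcases Nat.eq_zero_or_pos a with rfl | ha
          · have hF0 : F = [] := expandIter_zero i
            have hB1 : B = [1] := expandIter_single_one i
            rw [hB1] at hρB hρle
            have hρ1 : ρ = [1] := hρB.eq_of_length (by simp at hρle ⊢; omega)
            rw [hF0, hρ1]
            simp [macaulay_one_left (i+1) (by omega)]
          · have hFsum : F.sum = (a + i + 1).choose (i+2) := sum_expandIter_single (i+1) a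
            have hFlen : F.length = (a + i).choose (i+1) := length_expandIter_single (i+1) a
            have hBlen : B.length = (a + i).choose i := by
              have h := length_expandIter_single i (a+1)
              rw [hB, h]
              congr 1
              omega
            rw [hBlen] at hρle
            rw [hFsum, hFlen, hρsum]
            exact (macaulay_step hi1 (by omega : i + 1 ≤ a + i) hρpos hρle).symm

/-- Theorem 2.13: let `T = (τ_0, τ_1, τ_2, …)` be a sequence of finite sequences such
that each `τ_d` is a truncation (i.e. a prefix) of `[n]^d`, with `τ_0 = (n)`.  Then `T`
is a coherent fractal growth, i.e. `τ_j` is a truncation of `[τ_{j-1}]` for every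
`j ≥ 1`, if and only if the sequence of lengths `(|τ_0|, |τ_1|, |τ_2|, …)` is an
`O`-sequence.  Here `[n]^d = expand^[d] [n]`. -/

theorem coherent_fractal_growth_iff_OSeq (n : ℕ) (hn : 0 < n)
    (T : ℕ → List ℕ) (hT0 : T 0 = [n]) (htr : ∀ d : ℕ, T d <+: expand^[d] [n]) :
    (∀ j : ℕ, 1 ≤ j → T j <+: expand (T (j - 1))) ↔
      IsOSeq (fun d => (T d).length) := by
  have hT1 : (T 0).length = 1 := by rw [hT0]; rfl
  constructor
  · intro hcoh
    refine ⟨hT1, fun i hi => ?_⟩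
    have h1 : T (i+1) <+: expand (T i) := hcoh (i+1) (by omega)
    have h2 := h1.length_le
    rw [length_expand, key i hi n (T i) (htr i)] at h2
    exact h2
  · rintro ⟨-, hO⟩
    intro j hj
    obtain ⟨i, rfl⟩ : ∃ i, j = i + 1 := ⟨j - 1, by omega⟩
    show T (i+1) <+: expand (T i)
    rcases Nat.eq_zero_or_pos i with rfl | hi
    · rw [hT0]
      have := htr 1
      rwa [Function.iterate_one] at this
    · have hlen : (T (i+1)).length ≤ (expand (T i)).length := by
        rw [length_expand, key i hi n (T i) (htr i)]
        exact hO i hi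
      refine List.prefix_of_prefix_length_le (htr (i+1)) ?_ hlen
      obtain ⟨t, ht⟩ := htr i
      rw [Function.iterate_succ_apply', ← ht, expand_append]
      exact ⟨expand t, rfl⟩
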